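/- Let n be a positive integer, ℓ_A, ℓ_U, ℓ_B > 0, 0 ≤ p_U < p_A ≤ 1, Δ = p_A − p_U, ρ = ℓ_A/ℓ_U, and τ̂ = n(p_A + p_U)/2 − ln(ρ)/(4Δ), and assume n·p_U ≤ τ̂ ≤ n·p_A. Let ε₁, …, ε_n be independent random variables in [0,1] with E[ε_i] ≤ p_U for all i. Then n·ℓ_B + P(Σ_{i=1}^n ε_i ≥ τ̂)·ℓ_U ≤ n·ℓ_B + exp(−(n/2)Δ²)·√(ℓ_A·ℓ_U). -/

import Mathlib

open MeasureTheory ProbabilityTheory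

open Real

open Real

/-- Hoeffding-type scalar inequality. -/
lemma hoeff_scalar (p : ℝ) (hp0 : 0 ≤ p) (hp1 : p ≤ 1) (t : ℝ) (ht : 0 ≤ t) :
    1 - p + p * Real.exp t ≤ Real.exp (p * t + t ^ 2 / 8) := by
  set D : ℝ → ℝ := fun x => 1 - p + p * Real.exp x with hDdef
  have hD : ∀ x, 0 < D x := by
    intro x
    rcases eq_or_lt_of_le hp0 with h | h
    · simp [hDdef, ← h]
    · have := mul_pos h (Real.exp_pos x)
      simp only [hDdef]; nlinarith
  set g : ℝ → ℝ := fun x => p + x / 4 - p * Real.exp x / D x with hgdef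
  set f : ℝ → ℝ := fun x => p * x + x ^ 2 / 8 - Real.log (D x) with hfdef
  have hDdiff : ∀ x, HasDerivAt D (p * Real.exp x) x := by
    intro x
    have h1 : HasDerivAt (fun x : ℝ => p * Real.exp x) (p * Real.exp x) x :=
      (Real.hasDerivAt_exp x).const_mul p
    exact (h1.const_add (1 - p))
  have hf' : ∀ x, HasDerivAt f (g x) x := by
    intro x
    have h1 : HasDerivAt (fun y : ℝ => p * y) p x := (hasDerivAt_id x).const_mul p |>.congr_deriv (by ring)
    have h2 : HasDerivAt (fun y : ℝ => y ^ 2 / 8) (x / 4) x := by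
      have := (hasDerivAt_pow 2 x).div_const 8
      simpa using this.congr_deriv (by ring)
    have h3 : HasDerivAt (fun y => Real.log (D y)) (p * Real.exp x / D x) x :=
      (hDdiff x).log (hD x).ne'
    exact (h1.add h2).sub h3
  have hg' : ∀ x, HasDerivAt g (1 / 4 - p * Real.exp x * (1 - p) / (D x) ^ 2) x := by
    intro x
    have h1 : HasDerivAt (fun x : ℝ => p * Real.exp x) (p * Real.exp x) x :=
      (Real.hasDerivAt_exp x).const_mul p
    have h3 : HasDerivAt (fun y => p * Real.exp y / D y)
        ((p * Real.exp x * D x - p * Real.exp x * (p * Real.exp x)) / (D x) ^ 2) x :=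
      h1.div (hDdiff x) (hD x).ne'
    have h2 : HasDerivAt (fun y : ℝ => p + y / 4) (1 / 4) x := by
      simpa using ((hasDerivAt_id x).div_const 4).const_add p
    have := h2.sub h3
    refine this.congr_deriv ?_
    have hDx : D x = 1 - p + p * Real.exp x := rfl
    rw [hDx]; ring
  have hgmono : Monotone g := by
    have hdiff : Differentiable ℝ g := fun x => (hg' x).differentiableAt
    refine monotone_of_deriv_nonneg hdiff ?_
    intro x
    rw [(hg' x).deriv]
    have hD2 : 0 < (D x) ^ 2 := pow_pos (hD x) 2
    have key : p * Real.exp x * (1 - p) / (D x) ^ 2 ≤ 1 / 4 := by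
      rw [div_le_iff₀ hD2]
      have : D x = 1 - p + p * Real.exp x := rfl
      nlinarith [sq_nonneg ((1 - p) - p * Real.exp x)]
    linarith
  have hg0 : g 0 = 0 := by
    simp [hgdef, hDdef]
  have hgnonneg : ∀ x, 0 ≤ x → 0 ≤ g x := by
    intro x hx
    rw [← hg0]; exact hgmono hx
  have hfmono : MonotoneOn f (Set.Ici (0 : ℝ)) := by
    have hdiff : Differentiable ℝ f := fun x => (hf' x).differentiableAt
    refine monotoneOn_of_deriv_nonneg (convex_Ici 0) hdiff.continuous.continuousOn
      hdiff.differentiableOn ?_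
    intro x hx
    rw [interior_Ici] at hx
    rw [(hf' x).deriv]
    exact hgnonneg x (le_of_lt hx)
  have hf0 : f 0 = 0 := by simp [hfdef, hDdef]
  have hft : 0 ≤ f t := by
    rw [← hf0]
    exact hfmono (Set.self_mem_Ici) (Set.mem_Ici.2 ht) ht
  have hlog : Real.log (D t) ≤ p * t + t ^ 2 / 8 := by
    simp only [hfdef] at hft; linarith
  calc D t = Real.exp (Real.log (D t)) := (Real.exp_log (hD t)).symm
    _ ≤ Real.exp (p * t + t ^ 2 / 8) := Real.exp_le_exp.2 hlog

lemma mgf_le_of_bounded {Ω : Type*} [MeasureSpace Ω] [IsProbabilityMeasure (ℙ : Measure Ω)]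
    (X : Ω → ℝ) (hX : Measurable X) (hb : ∀ ω, X ω ∈ Set.Icc (0 : ℝ) 1)
    (p : ℝ) (hp0 : 0 ≤ p) (hp1 : p ≤ 1) (hm : ∫ ω, X ω ≤ p)
    (t : ℝ) (ht : 0 ≤ t) :
    mgf X ℙ t ≤ Real.exp (p * t + t ^ 2 / 8) := by
  have hintX : Integrable X ℙ := by
    refine Integrable.mono' (integrable_const 1) hX.aestronglyMeasurable ?_
    filter_upwards with ω
    rw [Real.norm_eq_abs, abs_le]
    exact ⟨by linarith [(hb ω).1], (hb ω).2⟩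
  have hpt : ∀ ω, Real.exp (t * X ω) ≤ 1 - X ω + X ω * Real.exp t := by
    intro ω
    obtain ⟨h0, h1⟩ := hb ω
    have := convexOn_exp.2 (Set.mem_univ (0 : ℝ)) (Set.mem_univ t)
      (by linarith : (0:ℝ) ≤ 1 - X ω) h0 (by ring)
    simpa [mul_comm] using this
  have hint1 : Integrable (fun ω => Real.exp (t * X ω)) ℙ := by
    refine Integrable.mono' (integrable_const (Real.exp t))
      ((hX.const_mul t).exp).aestronglyMeasurable ?_
    filter_upwards with ω
    rw [Real.norm_eq_abs, abs_of_pos (Real.exp_pos _)]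
    exact Real.exp_le_exp.2 (by nlinarith [(hb ω).1, (hb ω).2])
  have hint2 : Integrable (fun ω => 1 - X ω + X ω * Real.exp t) ℙ :=
    ((integrable_const (1:ℝ)).sub hintX).add (hintX.mul_const _)
  have h1 : mgf X ℙ t ≤ ∫ ω, (1 - X ω + X ω * Real.exp t) := by
    exact integral_mono hint1 hint2 hpt
  have h2 : ∫ ω, (1 - X ω + X ω * Real.exp t)
      = 1 - (∫ ω, X ω) + (∫ ω, X ω) * Real.exp t := by
    have hsub : Integrable (fun ω => 1 - X ω) ℙ := (integrable_const 1).sub hintX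
    have hmul : Integrable (fun ω => X ω * Real.exp t) ℙ := hintX.mul_const _
    have hone : Integrable (fun _ : Ω => (1:ℝ)) ℙ := integrable_const 1
    rw [integral_add hsub hmul, integral_sub hone hintX, integral_mul_const, integral_const]
    simp
  have h3 : 1 - (∫ ω, X ω) + (∫ ω, X ω) * Real.exp t ≤ 1 - p + p * Real.exp t := by
    have he : (1:ℝ) ≤ Real.exp t := by simpa using Real.exp_le_exp.2 ht
    nlinarith
  calc mgf X ℙ t ≤ 1 - p + p * Real.exp t := by rw [h2] at h1; linarith
    _ ≤ Real.exp (p * t + t ^ 2 / 8) := hoeff_scalar p hp0 hp1 t ht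

/-- Theorem 1 (user side): with the nearly-optimal threshold
`τ̂ = n (pA + pU) / 2 - ln ρ / (4 Δ)`, the user's expected loss
`n ℓB + P(∑ εᵢ ≥ τ̂) ℓU` is bounded by `n ℓB + exp (-(n/2) Δ²) √(ℓA ℓU)`. -/
theorem theorem1_user
    {Ω : Type*} [MeasureSpace Ω] [IsProbabilityMeasure (ℙ : Measure Ω)]
    (n : ℕ) (hn : 0 < n)
    (ℓA ℓU ℓB : ℝ) (hℓA : 0 < ℓA) (hℓU : 0 < ℓU) (hℓB : 0 < ℓB)
    (pA pU : ℝ) (hpU : 0 ≤ pU) (hlt : pU < pA) (hpA : pA ≤ 1)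
    (Δ : ℝ) (hΔ : Δ = pA - pU)
    (ρ : ℝ) (hρ : ρ = ℓA / ℓU)
    (τ : ℝ) (hτ : τ = n * (pA + pU) / 2 - Real.log ρ / (4 * Δ))
    (hτl : n * pU ≤ τ) (hτu : τ ≤ n * pA)
    (ε : Fin n → Ω → ℝ)
    (hmeas : ∀ i, Measurable (ε i))
    (hindep : iIndepFun ε ℙ)
    (hbound : ∀ i ω, ε i ω ∈ Set.Icc (0 : ℝ) 1)
    (hmean : ∀ i, ∫ ω, ε i ω ≤ pU) :
    n * ℓB + (ℙ {ω | τ ≤ ∑ i, ε i ω}).toReal * ℓU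
      ≤ n * ℓB + Real.exp (-(n / 2) * Δ ^ 2) * Real.sqrt (ℓA * ℓU) := by
  have hn' : (0:ℝ) < n := Nat.cast_pos.2 hn
  have hΔ0 : 0 < Δ := by rw [hΔ]; linarith
  have hpU1 : pU ≤ 1 := le_of_lt (lt_of_lt_of_le hlt hpA)
  set L := Real.log ρ with hL
  set s := τ - (n:ℝ) * pU with hs
  have hs0 : 0 ≤ s := by rw [hs]; linarith
  set t := 4 * s / (n:ℝ) with htdef
  have ht : 0 ≤ t := by positivity
  clear_value t
  clear_value s
  clear_value L
  -- integrability of exp (t * sum)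
  have hfun : (∑ i, ε i) = fun ω => ∑ i, ε i ω := by
    funext ω; simp [Finset.sum_apply]
  have hSmeas : Measurable (∑ i, ε i) := by
    rw [hfun]; exact Finset.measurable_sum _ (fun i _ => hmeas i)
  have hint : Integrable (fun ω => Real.exp (t * (∑ i, ε i) ω)) ℙ := by
    refine Integrable.mono' (integrable_const (Real.exp (t * n)))
      ((hSmeas.const_mul t).exp).aestronglyMeasurable ?_
    filter_upwards with ω
    rw [Real.norm_eq_abs, abs_of_pos (Real.exp_pos _)]
    refine Real.exp_le_exp.2 (mul_le_mul_of_nonneg_left ?_ ht)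
    calc (∑ i, ε i) ω = ∑ i, ε i ω := by simp [Finset.sum_apply]
      _ ≤ ∑ _i : Fin n, (1:ℝ) := Finset.sum_le_sum fun i _ => (hbound i ω).2
      _ = n := by simp
  -- Chernoff
  have hchern := measure_ge_le_exp_mul_mgf (X := ∑ i, ε i) (μ := ℙ) τ ht hint
  have hset : {ω | τ ≤ ∑ i, ε i ω} = {ω | τ ≤ (∑ i, ε i) ω} := by
    ext ω; simp [Finset.sum_apply]
  -- mgf bound
  have hmgf : mgf (∑ i, ε i) ℙ t ≤ Real.exp (pU * t + t ^ 2 / 8) ^ n := by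
    rw [hindep.mgf_sum hmeas Finset.univ]
    calc ∏ i, mgf (ε i) ℙ t
        ≤ ∏ _i : Fin n, Real.exp (pU * t + t ^ 2 / 8) :=
          Finset.prod_le_prod (fun i _ => mgf_nonneg)
            (fun i _ => mgf_le_of_bounded (ε i) (hmeas i) (hbound i) pU hpU hpU1 (hmean i) t ht)
      _ = Real.exp (pU * t + t ^ 2 / 8) ^ n := by simp
  have hPle : (ℙ {ω | τ ≤ ∑ i, ε i ω}).toReal
      ≤ Real.exp (-t * τ + (n:ℝ) * (pU * t + t ^ 2 / 8)) := by
    rw [hset]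
    refine hchern.trans ?_
    rw [Real.exp_add]
    exact mul_le_mul_of_nonneg_left (hmgf.trans_eq (Real.exp_nat_mul _ n).symm)
      (Real.exp_pos _).le
  -- exponent algebra
  have hτ' : τ = (n:ℝ) * pU + (n:ℝ) * Δ / 2 - L / (4 * Δ) := by
    rw [hτ, hΔ]; ring
  have hkey : 4 * Δ * s = 2 * (n:ℝ) * Δ ^ 2 - L := by
    rw [hs, hτ']
    field_simp
    ring
  have e1 : -t * τ + (n:ℝ) * (pU * t + t ^ 2 / 8) = -2 * s ^ 2 / (n:ℝ) := by
    rw [htdef, hs]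
    field_simp
    ring
  have e2 : -2 * s ^ 2 / (n:ℝ) ≤ -((n:ℝ) / 2) * Δ ^ 2 + L / 2 := by
    rw [div_le_iff₀ hn']
    have h2 : (4 * Δ * s) ^ 2 = (2 * (n:ℝ) * Δ ^ 2 - L) ^ 2 := by rw [hkey]
    have h8 : (0:ℝ) < 8 * Δ ^ 2 := by positivity
    have hprod : (2 * s ^ 2 - ((n:ℝ) ^ 2 * Δ ^ 2 / 2 - (n:ℝ) * L / 2)) * (8 * Δ ^ 2) = L ^ 2 := by
      linear_combination h2
    have hXeq : 2 * s ^ 2 - ((n:ℝ) ^ 2 * Δ ^ 2 / 2 - (n:ℝ) * L / 2) = L ^ 2 / (8 * Δ ^ 2) := by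
      rw [eq_div_iff h8.ne']; exact hprod
    have hXnn : (0:ℝ) ≤ L ^ 2 / (8 * Δ ^ 2) := div_nonneg (sq_nonneg L) h8.le
    have hring : (-((n:ℝ) / 2) * Δ ^ 2 + L / 2) * (n:ℝ)
        = -((n:ℝ) ^ 2 * Δ ^ 2 / 2) + (n:ℝ) * L / 2 := by ring
    rw [hring]
    linarith
  have hexp : Real.exp (-t * τ + (n:ℝ) * (pU * t + t ^ 2 / 8))
      ≤ Real.exp (-((n:ℝ) / 2) * Δ ^ 2 + L / 2) := by
    refine Real.exp_le_exp.2 ?_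
    rw [e1]; exact e2
  -- sqrt algebra
  have hρpos : 0 < ρ := by rw [hρ]; positivity
  have hsqrt : Real.exp (L / 2) * ℓU = Real.sqrt (ℓA * ℓU) := by
    have h1 : Real.exp (L / 2) = Real.sqrt ρ := by
      rw [Real.sqrt_eq_rpow, Real.rpow_def_of_pos hρpos, hL]
      congr 1; ring
    rw [h1, hρ, show ℓA * ℓU = ℓA / ℓU * ℓU ^ 2 by field_simp,
      Real.sqrt_mul (by positivity), Real.sqrt_sq hℓU.le]
  have : (ℙ {ω | τ ≤ ∑ i, ε i ω}).toReal * ℓU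
      ≤ Real.exp (-((n:ℝ) / 2) * Δ ^ 2) * Real.sqrt (ℓA * ℓU) := by
    calc (ℙ {ω | τ ≤ ∑ i, ε i ω}).toReal * ℓU
        ≤ Real.exp (-((n:ℝ) / 2) * Δ ^ 2 + L / 2) * ℓU := by
          exact mul_le_mul_of_nonneg_right (hPle.trans hexp) hℓU.le
      _ = Real.exp (-((n:ℝ) / 2) * Δ ^ 2) * (Real.exp (L / 2) * ℓU) := by
          rw [Real.exp_add]; ring
      _ = Real.exp (-((n:ℝ) / 2) * Δ ^ 2) * Real.sqrt (ℓA * ℓU) := by rw [hsqrt]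
  linarith
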